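/- If x, y, z are coprime integers with x^2 + y^3 = z^10, y even, and x ≡ z^5 (mod 4), then there exist coprime integers u, v with u odd, z odd, y = -2*u*v, x + z^5 = 2*u^3, x - z^5 = 4*v^3, and u^3 - 2*v^3 = z^5. -/

import Mathlib

lemma cube_of_coprime' {a b c : ℤ} (h : IsCoprime a b) (heq : a * b = c ^ 3) :
    ∃ a0 : ℤ, a = a0 ^ 3 := by
  obtain ⟨d, u, hu⟩ := exists_associated_pow_of_mul_eq_pow' h heq
  cases' Int.units_eq_one_or u with h' h'
  · exact ⟨d, by rw [← hu, h']; simp⟩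
  · exact ⟨-d, by rw [← hu, h']; push_cast; ring⟩

theorem case_y_even (x y z : ℤ) (hxy : IsCoprime x y) (hyz : IsCoprime y z)
    (hxz : IsCoprime x z) (heq : x ^ 2 + y ^ 3 = z ^ 10) (hy : Even y)
    (hmod : x ≡ z ^ 5 [ZMOD 4]) :
    ∃ u v : ℤ, IsCoprime u v ∧ Odd u ∧ Odd z ∧ y = -2 * u * v ∧
      x + z ^ 5 = 2 * u ^ 3 ∧ x - z ^ 5 = 4 * v ^ 3 ∧ u ^ 3 - 2 * v ^ 3 = z ^ 5 := by
  obtain ⟨w, hw⟩ := hy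
  have hw' : y = 2 * w := by linarith
  -- z is odd
  have hzodd : Odd z := by
    rw [← Int.not_even_iff_odd]
    intro hze
    obtain ⟨k, hk⟩ := hze
    have : IsUnit (2 : ℤ) := hyz.isUnit_of_dvd' ⟨w, hw'⟩ ⟨k, by linarith⟩
    rw [Int.isUnit_iff] at this
    omega
  -- 4 divides x - z^5
  have h4 : (4 : ℤ) ∣ z ^ 5 - x := Int.ModEq.dvd hmod
  obtain ⟨b, hb⟩ := h4
  have hxb : x - z ^ 5 = 4 * (-b) := by linarith
  set v := -b with hv
  set u := 2 * v + z ^ 5 with hu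
  have hxa : x + z ^ 5 = 2 * u := by rw [hu]; linarith
  have hxs : x = u + 2 * v := by rw [hu]; linarith
  have hzs : z ^ 5 = u - 2 * v := by rw [hu]; ring
  -- u is odd
  have huodd : Odd u := by
    rw [hu]
    exact (even_two_mul v).add_odd (hzodd.pow)
  -- coprimality of u and v
  have hxz5 : IsCoprime x (z ^ 5) := hxz.pow_right
  obtain ⟨s, t, hst⟩ := hxz5
  have huv : IsCoprime u v := ⟨s + t, 2 * s - 2 * t, by
    rw [hxs, hzs] at hst; linarith [hst]⟩
  -- the product equation
  have hprod : u * v = (-w) ^ 3 := by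
    have h2 : (2 * u) * (4 * v) = -(y ^ 3) := by
      rw [← hxa, ← hxb]; ring_nf; linarith [heq]
    have : 8 * (u * v) = 8 * ((-w) ^ 3) := by rw [hw'] at h2; ring_nf; ring_nf at h2; linarith
    linarith
  obtain ⟨a0, ha0⟩ := cube_of_coprime' huv hprod
  obtain ⟨b0, hb0⟩ := cube_of_coprime' huv.symm (by rw [mul_comm] at hprod; exact hprod)
  have hwab : a0 * b0 = -w := by
    have h3 : (a0 * b0) ^ 3 = (-w) ^ 3 := by rw [← hprod, ha0, hb0]; ring
    exact (Odd.strictMono_pow (R := ℤ) ⟨1, by norm_num⟩).injective h3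
  refine ⟨a0, b0, ?_, ?_, hzodd, ?_, ?_, ?_, ?_⟩
  · exact (IsCoprime.pow_iff (by norm_num) (by norm_num)).mp (ha0 ▸ hb0 ▸ huv)
  · exact (Int.odd_pow' (by norm_num)).mp (ha0 ▸ huodd)
  · rw [hw']; linarith [hwab]
  · rw [hxa, ha0]
  · rw [hxb, hb0]
  · rw [← ha0, ← hb0]; linarith [hzs]
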